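/- arXiv:2005.02566 — 3 statements merged into one kernel-verified Lean document; each statement's English description precedes it below -/
import Mathlib

section
/- Let τ ∈ (3,4) and θ = (θ_i)_{i≥1} be a nonincreasing sequence of positive reals with Σ θ_i³ < ∞. Define Ψ_θ(u) = Σ_{i≥1} θ_i (e^{−uθ_i} − 1 + uθ_i). If there exists M ≥ 1 such that θ_{i+1}^{τ−2} Σ_{j=1}^i θ_j ≥ 1/M for all i ≥ 1, then ∫_1^∞ du/Ψ_θ(u) < ∞. -/
open MeasureTheory Set Real

lemma aux_nonneg (x : ℝ) : 0 ≤ Real.exp (-x) - 1 + x := by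
  have := Real.add_one_le_exp (-x); linarith

lemma aux_quad {x : ℝ} (h0 : 0 ≤ x) (h2 : x ≤ 2) :
    x ^ 2 / 12 ≤ Real.exp (-x) - 1 + x := by
  rcases le_or_gt x 1 with h1 | h1
  · have hb := Real.exp_bound (x := -x) (by rwa [abs_neg, abs_of_nonneg h0]) (n := 3)
      (by norm_num)
    rw [abs_le] at hb
    have hb1 := hb.1
    have habs : |(-x)| = x := by rw [abs_neg, abs_of_nonneg h0]
    simp only [Finset.sum_range_succ, Finset.sum_range_zero, habs] at hb1
    norm_num [Nat.factorial] at hb1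
    have hx3 : x ^ 3 ≤ x ^ 2 := by nlinarith [sq_nonneg x]
    nlinarith [hx3]
  · have he : Real.exp (-x) = Real.exp (-1) * Real.exp (1 - x) := by
      rw [← Real.exp_add]; ring_nf
    have h3 := Real.add_one_le_exp (1 - x)
    have h4 : Real.exp (-1) ≤ 1 := Real.exp_le_one_iff.2 (by norm_num)
    have h5 : (1 : ℝ) / 3 ≤ Real.exp (-1) := by
      rw [Real.exp_neg, ← one_div]
      exact one_div_le_one_div_of_le (Real.exp_pos 1) (by linarith [Real.exp_one_lt_d9])
    have hA : Real.exp (-1) * (2 - x) ≤ Real.exp (-1) * Real.exp (1 - x) :=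
      mul_le_mul_of_nonneg_left (by linarith) (Real.exp_pos (-1)).le
    have hB : 0 ≤ (x - 1) * (1 - Real.exp (-1)) := mul_nonneg (by linarith) (by linarith)
    have hx4 : x ^ 2 ≤ 4 := by nlinarith
    nlinarith [hA, hB, h5, hx4, he]

lemma aux_lin {x : ℝ} (h2 : 2 ≤ x) : x / 2 ≤ Real.exp (-x) - 1 + x := by
  have := Real.exp_pos (-x); linarith

/-- If `τ ∈ (3,4)`, `θ` is a nonincreasing positive sequence with `∑ θ_i³ < ∞`, and
`θ_{i+1}^{τ−2} ∑_{j=1}^i θ_j ≥ 1/M` for all `i`, then `∫_1^∞ du / Ψ_θ(u) < ∞`, where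
`Ψ_θ(u) = ∑_i θ_i (e^{−uθ_i} − 1 + uθ_i)`. -/
theorem stmt4 (τ : ℝ) (hτ : τ ∈ Set.Ioo (3 : ℝ) 4) (θ : ℕ → ℝ)
    (hpos : ∀ i, 0 < θ i) (hanti : Antitone θ)
    (hsum : Summable (fun i => θ i ^ 3))
    (M : ℝ) (hM : 1 ≤ M)
    (hlb : ∀ i : ℕ, 1 / M ≤ θ (i + 1) ^ (τ - 2) * ∑ j ∈ Finset.range (i + 1), θ j) :
    IntegrableOn
      (fun u => 1 / (∑' i, θ i * (Real.exp (-u * θ i) - 1 + u * θ i))) (Set.Ici (1 : ℝ)) := by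
  obtain ⟨hτ3, hτ4⟩ := hτ
  have hM0 : 0 < M := lt_of_lt_of_le one_pos hM
  set S : ℝ := ∑' i, θ i ^ 3 with hS_def
  have hS : 0 < S := Summable.tsum_pos hsum (fun i => (pow_pos (hpos i) 3).le) 0 (pow_pos (hpos 0) 3)
  set c : ℝ := min (S / 12) (1 / (4 * M)) with hc_def
  have hc : 0 < c := lt_min (by positivity) (by positivity)
  -- term nonneg
  have hnn : ∀ (u : ℝ) (i : ℕ), 0 ≤ θ i * (Real.exp (-u * θ i) - 1 + u * θ i) := by
    intro u i
    exact mul_nonneg (hpos i).le (by simpa [neg_mul] using aux_nonneg (u * θ i))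
  -- key pointwise lower bound
  have key : ∀ u : ℝ, 1 ≤ u →
      Summable (fun i => θ i * (Real.exp (-u * θ i) - 1 + u * θ i)) →
      c * u ^ (τ - 2) ≤ ∑' i, θ i * (Real.exp (-u * θ i) - 1 + u * θ i) := by
    intro u hu hsumm
    have hu0 : 0 < u := lt_of_lt_of_le one_pos hu
    have hrpow_le : u ^ (τ - 2) ≤ u ^ (2 : ℝ) :=
      Real.rpow_le_rpow_of_exponent_le hu (by linarith)
    by_cases hA : u * θ 0 < 2
    · -- all u θ_i < 2 : quadratic regime
      have hstep : ∀ i, u ^ 2 * θ i ^ 3 / 12 ≤ θ i * (Real.exp (-u * θ i) - 1 + u * θ i) := by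
        intro i
        have hx0 : 0 ≤ u * θ i := mul_nonneg hu0.le (hpos i).le
        have hx2 : u * θ i ≤ 2 :=
          le_of_lt (lt_of_le_of_lt (mul_le_mul_of_nonneg_left (hanti (Nat.zero_le i)) hu0.le) hA)
        have h := mul_le_mul_of_nonneg_left (aux_quad hx0 hx2) (hpos i).le
        calc u ^ 2 * θ i ^ 3 / 12 = θ i * ((u * θ i) ^ 2 / 12) := by ring
        _ ≤ θ i * (Real.exp (-(u * θ i)) - 1 + u * θ i) := h
        _ = θ i * (Real.exp (-u * θ i) - 1 + u * θ i) := by rw [neg_mul]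
      have hsum2 : Summable (fun i => u ^ 2 * θ i ^ 3 / 12) := by
        simpa [mul_div_assoc] using (hsum.div_const 12).mul_left (u ^ 2)
      have h1 : ∑' i, u ^ 2 * θ i ^ 3 / 12
          ≤ ∑' i, θ i * (Real.exp (-u * θ i) - 1 + u * θ i) :=
        Summable.tsum_le_tsum hstep hsum2 hsumm
      have h2 : ∑' i, u ^ 2 * θ i ^ 3 / 12 = u ^ 2 / 12 * S := by
        rw [hS_def, ← tsum_mul_left]
        congr 1; ext i; ring
      have h3 : c * u ^ (τ - 2) ≤ u ^ 2 / 12 * S := by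
        have hh : c * u ^ (τ - 2) ≤ S / 12 * u ^ (2 : ℝ) :=
          mul_le_mul (min_le_left _ _) hrpow_le (Real.rpow_nonneg hu0.le _) (by positivity)
        calc c * u ^ (τ - 2) ≤ S / 12 * u ^ (2 : ℝ) := hh
        _ = u ^ 2 / 12 * S := by rw [Real.rpow_two]; ring
      linarith
    · -- there is a nontrivial linear regime
      push_neg at hA
      have hex : ∃ n, u * θ n < 2 := by
        by_contra hcon
        push_neg at hcon
        have h30 : (0:ℝ) < (2 / u) ^ 3 := by positivity
        have htd := hsum.tendsto_atTop_zero
        rw [Metric.tendsto_atTop] at htd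
        obtain ⟨N, hN⟩ := htd ((2 / u) ^ 3) h30
        have h1 := hN N le_rfl
        rw [Real.dist_eq, sub_zero, abs_of_nonneg (pow_nonneg (hpos N).le 3)] at h1
        have h2 : 2 / u ≤ θ N := (div_le_iff₀' hu0).2 (hcon N)
        have := pow_le_pow_left₀ (by positivity) h2 3
        linarith
      set k : ℕ := Nat.find hex with hk_def
      have hk2 : u * θ k < 2 := Nat.find_spec hex
      have hk0 : k ≠ 0 := by
        intro h; rw [h] at hk2; linarith
      obtain ⟨i, hi⟩ : ∃ i, k = i + 1 :=
        ⟨k - 1, (Nat.succ_pred_eq_of_pos (Nat.pos_of_ne_zero hk0)).symm⟩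
      have hjk : ∀ j ∈ Finset.range k, 2 ≤ u * θ j := fun j hj =>
        le_of_not_gt (Nat.find_min hex (Finset.mem_range.1 hj))
      -- partial sum bound
      have hps : ∑ j ∈ Finset.range k, θ j
          ≤ ∑ j ∈ Finset.range k, θ j * (Real.exp (-u * θ j) - 1 + u * θ j) := by
        refine Finset.sum_le_sum fun j hj => ?_
        have h2j := hjk j hj
        have h := mul_le_mul_of_nonneg_left (aux_lin h2j) (hpos j).le
        calc θ j = θ j * 1 := (mul_one _).symm
        _ ≤ θ j * (u * θ j / 2) := by
            apply mul_le_mul_of_nonneg_left _ (hpos j).le; linarith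
        _ ≤ θ j * (Real.exp (-(u * θ j)) - 1 + u * θ j) := h
        _ = θ j * (Real.exp (-u * θ j) - 1 + u * θ j) := by rw [neg_mul]
      have hts : ∑ j ∈ Finset.range k, θ j * (Real.exp (-u * θ j) - 1 + u * θ j)
          ≤ ∑' j, θ j * (Real.exp (-u * θ j) - 1 + u * θ j) :=
        Summable.sum_le_tsum _ (fun j _ => hnn u j) hsumm
      -- use hlb
      have hθk : 0 < θ k := hpos k
      have hrθ : (0:ℝ) < θ k ^ (τ - 2) := Real.rpow_pos_of_pos hθk _
      have hup : (0:ℝ) < u ^ (τ - 2) := Real.rpow_pos_of_pos hu0 _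
      have hlbi : 1 / (M * θ k ^ (τ - 2)) ≤ ∑ j ∈ Finset.range k, θ j := by
        have hh := hlb i
        rw [← hi] at hh
        rw [div_le_iff₀ hM0] at hh
        rw [div_le_iff₀ (mul_pos hM0 hrθ)]
        calc (1:ℝ) ≤ θ k ^ (τ - 2) * (∑ j ∈ Finset.range k, θ j) * M := hh
        _ = (∑ j ∈ Finset.range k, θ j) * (M * θ k ^ (τ - 2)) := by ring
      -- θ k ≤ 2 / u so θ k ^ (τ-2) is small
      have hθk2 : θ k ≤ 2 / u := le_of_lt ((lt_div_iff₀' hu0).2 hk2)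
      have hr1 : θ k ^ (τ - 2) ≤ (2 / u) ^ (τ - 2) :=
        Real.rpow_le_rpow hθk.le hθk2 (by linarith)
      have hr2 : (2 / u) ^ (τ - 2) = 2 ^ (τ - 2) / u ^ (τ - 2) :=
        Real.div_rpow (by norm_num : (0:ℝ) ≤ 2) hu0.le _
      have hr3 : (2:ℝ) ^ (τ - 2) ≤ 4 := by
        have hh : (2:ℝ) ^ (τ - 2) ≤ 2 ^ (2:ℝ) :=
          Real.rpow_le_rpow_of_exponent_le (by norm_num) (by linarith)
        have h4 : (2:ℝ) ^ (2:ℝ) = 4 := by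
          rw [Real.rpow_two]; norm_num
        linarith
      have hθ4 : θ k ^ (τ - 2) ≤ 4 / u ^ (τ - 2) := by
        calc θ k ^ (τ - 2) ≤ 2 ^ (τ - 2) / u ^ (τ - 2) := hr2 ▸ hr1
        _ ≤ 4 / u ^ (τ - 2) := by gcongr
      have hfin : c * u ^ (τ - 2) ≤ 1 / (M * θ k ^ (τ - 2)) := by
        rw [le_div_iff₀ (mul_pos hM0 hrθ)]
        have hc2 : c ≤ 1 / (4 * M) := min_le_right _ _
        have h1 : θ k ^ (τ - 2) * u ^ (τ - 2) ≤ 4 := (le_div_iff₀ hup).1 hθ4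
        have h2 : c * (θ k ^ (τ - 2) * u ^ (τ - 2)) ≤ 1 / (4 * M) * 4 :=
          mul_le_mul hc2 h1 (by positivity) (by positivity)
        calc c * u ^ (τ - 2) * (M * θ k ^ (τ - 2))
            = M * (c * (θ k ^ (τ - 2) * u ^ (τ - 2))) := by ring
        _ ≤ M * (1 / (4 * M) * 4) := mul_le_mul_of_nonneg_left h2 hM0.le
        _ = 1 := by field_simp
      calc c * u ^ (τ - 2) ≤ 1 / (M * θ k ^ (τ - 2)) := hfin
      _ ≤ ∑ j ∈ Finset.range k, θ j := hlbi
      _ ≤ ∑ j ∈ Finset.range k, θ j * (Real.exp (-u * θ j) - 1 + u * θ j) := hps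
      _ ≤ ∑' j, θ j * (Real.exp (-u * θ j) - 1 + u * θ j) := hts
  -- measurability
  have hmeas : Measurable (fun u : ℝ => ∑' i, θ i * (Real.exp (-u * θ i) - 1 + u * θ i)) := by
    have heq : (fun u : ℝ => ∑' i, θ i * (Real.exp (-u * θ i) - 1 + u * θ i))
        = fun u => (∑' i, ENNReal.ofReal (θ i * (Real.exp (-u * θ i) - 1 + u * θ i))).toReal := by
      funext u
      by_cases hs : Summable (fun i => θ i * (Real.exp (-u * θ i) - 1 + u * θ i))
      · rw [← ENNReal.ofReal_tsum_of_nonneg (fun i => hnn u i) hs,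
          ENNReal.toReal_ofReal (tsum_nonneg fun i => hnn u i)]
      · rw [tsum_eq_zero_of_not_summable hs]
        have htop : (∑' i, ENNReal.ofReal (θ i * (Real.exp (-u * θ i) - 1 + u * θ i))) = ⊤ := by
          by_contra h
          apply hs
          have hs2 := ENNReal.summable_toReal h
          have heq2 : (fun i => (ENNReal.ofReal (θ i * (Real.exp (-u * θ i) - 1 + u * θ i))).toReal)
              = fun i => θ i * (Real.exp (-u * θ i) - 1 + u * θ i) := by
            funext i; exact ENNReal.toReal_ofReal (hnn u i)
          rwa [heq2] at hs2
        simp only [htop, ENNReal.toReal_top]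
    rw [heq]
    apply Measurable.ennreal_toReal
    apply Measurable.ennreal_tsum
    intro i
    apply Measurable.ennreal_ofReal
    fun_prop
  have hmeas1 : Measurable
      (fun u : ℝ => 1 / (∑' i, θ i * (Real.exp (-u * θ i) - 1 + u * θ i))) := by
    exact hmeas.const_div 1
  rw [integrableOn_Ici_iff_integrableOn_Ioi]
  have hg : IntegrableOn (fun u : ℝ => c⁻¹ * u ^ (2 - τ)) (Set.Ioi (1:ℝ)) :=
    (integrableOn_Ioi_rpow_of_lt (by linarith) one_pos).const_mul c⁻¹
  refine Integrable.mono' hg hmeas1.aestronglyMeasurable ?_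
  filter_upwards [ae_restrict_mem measurableSet_Ioi] with u hu
  have hu1 : 1 ≤ u := le_of_lt hu
  have hu0 : 0 < u := lt_of_lt_of_le one_pos hu1
  by_cases hsm : Summable (fun i => θ i * (Real.exp (-u * θ i) - 1 + u * θ i))
  · have hk := key u hu1 hsm
    have hup : (0:ℝ) < u ^ (τ - 2) := Real.rpow_pos_of_pos hu0 _
    have hΨpos : 0 < ∑' i, θ i * (Real.exp (-u * θ i) - 1 + u * θ i) :=
      lt_of_lt_of_le (mul_pos hc hup) hk
    rw [Real.norm_eq_abs, abs_of_pos (by positivity)]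
    have hrr : c⁻¹ * u ^ (2 - τ) = 1 / (c * u ^ (τ - 2)) := by
      rw [one_div, mul_inv, ← Real.rpow_neg hu0.le, neg_sub]
    rw [hrr]
    exact one_div_le_one_div_of_le (mul_pos hc hup) hk
  · rw [tsum_eq_zero_of_not_summable hsm]
    simp only [div_zero, norm_zero]
    positivity
end

section
/- Let θ_i = i^{−1/2} for i ≥ 1 and Ψ_θ(u) = Σ_{i≥1} θ_i (e^{−uθ_i} − 1 + uθ_i). Then there is a constant C such that Ψ_θ(u) ≤ C(u log u + u) for all u ≥ 2, and consequently ∫_1^∞ du/Ψ_θ(u) = ∞. -/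
open MeasureTheory Set Real

/-- `Ψ_θ` for the sequence `θ_i = i^{−1/2}`, `i ≥ 1`. -/
noncomputable def PsiHalf (u : ℝ) : ℝ :=
  ∑' i : ℕ, ((i : ℝ) + 1) ^ (-(1 / 2 : ℝ)) *
    (Real.exp (-u * ((i : ℝ) + 1) ^ (-(1 / 2 : ℝ))) - 1 + u * ((i : ℝ) + 1) ^ (-(1 / 2 : ℝ)))

namespace PsiHalfAux

noncomputable def θ (i : ℕ) : ℝ := ((i : ℝ) + 1) ^ (-(1 / 2 : ℝ))

noncomputable def g (u : ℝ) (i : ℕ) : ℝ :=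
  ((i : ℝ) + 1) ^ (-(1 / 2 : ℝ)) *
    (Real.exp (-u * ((i : ℝ) + 1) ^ (-(1 / 2 : ℝ))) - 1 + u * ((i : ℝ) + 1) ^ (-(1 / 2 : ℝ)))

lemma psi_eq (u : ℝ) : PsiHalf u = ∑' i, g u i := rfl

lemma θ_pos (i : ℕ) : 0 < θ i := Real.rpow_pos_of_pos (by positivity) _

lemma θ_sq (i : ℕ) : θ i ^ 2 = ((i : ℝ) + 1)⁻¹ := by
  rw [θ, ← Real.rpow_natCast (((i : ℝ) + 1) ^ (-(1 / 2 : ℝ))) 2,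
    ← Real.rpow_mul (by positivity)]
  norm_num [Real.rpow_neg_one]

lemma θ_cube (i : ℕ) : θ i ^ 3 = ((i : ℝ) + 1) ^ (-(3 / 2 : ℝ)) := by
  rw [θ, ← Real.rpow_natCast (((i : ℝ) + 1) ^ (-(1 / 2 : ℝ))) 3,
    ← Real.rpow_mul (by positivity)]
  norm_num

lemma E_nonneg (x : ℝ) : 0 ≤ Real.exp (-x) - 1 + x := by
  have := Real.add_one_le_exp (-x); linarith

lemma E_le_sq {x : ℝ} (hx : 0 ≤ x) : Real.exp (-x) - 1 + x ≤ x ^ 2 := by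
  have h1 : x + 1 ≤ Real.exp x := Real.add_one_le_exp x
  have h2 : Real.exp (-x) ≤ (1 + x)⁻¹ := by
    rw [Real.exp_neg]
    exact inv_anti₀ (by linarith) (by linarith)
  have h3 : (1 + x)⁻¹ - 1 + x = x ^ 2 / (1 + x) := by
    field_simp; ring
  have h4 : x ^ 2 / (1 + x) ≤ x ^ 2 := div_le_self (by positivity) (by linarith)
  linarith

lemma E_le_lin {x : ℝ} (hx : 0 ≤ x) : Real.exp (-x) - 1 + x ≤ x := by
  have : Real.exp (-x) ≤ 1 := Real.exp_le_one_iff.mpr (by linarith)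
  linarith

lemma g_eq (u : ℝ) (i : ℕ) :
    g u i = θ i * (Real.exp (-(u * θ i)) - 1 + u * θ i) := by
  rw [g, θ, neg_mul]

lemma g_nonneg {u : ℝ} (i : ℕ) : 0 ≤ g u i := by
  rw [g_eq]
  exact mul_nonneg (θ_pos i).le (E_nonneg _)

lemma g_le_sq {u : ℝ} (hu : 0 ≤ u) (i : ℕ) : g u i ≤ u * θ i ^ 2 := by
  rw [g_eq]
  have h := E_le_lin (mul_nonneg hu (θ_pos i).le)
  calc θ i * (Real.exp (-(u * θ i)) - 1 + u * θ i) ≤ θ i * (u * θ i) :=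
        mul_le_mul_of_nonneg_left h (θ_pos i).le
    _ = u * θ i ^ 2 := by ring

lemma g_le_cube {u : ℝ} (hu : 0 ≤ u) (i : ℕ) : g u i ≤ u ^ 2 * θ i ^ 3 := by
  rw [g_eq]
  have h := E_le_sq (mul_nonneg hu (θ_pos i).le)
  calc θ i * (Real.exp (-(u * θ i)) - 1 + u * θ i) ≤ θ i * (u * θ i) ^ 2 :=
        mul_le_mul_of_nonneg_left h (θ_pos i).le
    _ = u ^ 2 * θ i ^ 3 := by ring

lemma summable_cube : Summable (fun i : ℕ => ((i : ℝ) + 1) ^ (-(3 / 2 : ℝ))) := by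
  have h : Summable (fun n : ℕ => (n : ℝ) ^ (-(3 / 2 : ℝ))) :=
    Real.summable_nat_rpow.2 (by norm_num)
  have h2 := (summable_nat_add_iff 1).2 h
  refine h2.congr fun i => ?_
  push_cast
  ring_nf

lemma g_summable {u : ℝ} (hu : 0 ≤ u) : Summable (g u) := by
  refine Summable.of_nonneg_of_le (fun i => g_nonneg i) (fun i => g_le_cube hu i) ?_
  simpa only [θ_cube] using summable_cube.mul_left (u ^ 2)

lemma step {k : ℝ} (hk : 1 ≤ k) :
    (k + 1) ^ (-(3 / 2 : ℝ)) ≤ 2 / Real.sqrt k - 2 / Real.sqrt (k + 1) := by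
  set a := Real.sqrt k with ha_def
  set b := Real.sqrt (k + 1) with hb_def
  have hk0 : (0:ℝ) < k := by linarith
  have ha : 0 < a := Real.sqrt_pos.2 hk0
  have hb : 0 < b := Real.sqrt_pos.2 (by linarith)
  have ha2 : a ^ 2 = k := Real.sq_sqrt hk0.le
  have hb2 : b ^ 2 = k + 1 := Real.sq_sqrt (by linarith)
  have ha1 : 1 ≤ a := by nlinarith
  have hab : a ≤ b := Real.sqrt_le_sqrt (by linarith)
  have hrw : (k + 1) ^ (-(3 / 2 : ℝ)) = (b ^ 3)⁻¹ := by
    rw [Real.rpow_neg (by linarith), hb_def, Real.sqrt_eq_rpow,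
      ← Real.rpow_natCast ((k+1) ^ (1/2 : ℝ)) 3, ← Real.rpow_mul (by linarith)]
    norm_num
  rw [hrw]
  have hd : 2 / a - 2 / b = 2 * (b - a) / (a * b) := by
    field_simp
  rw [hd, inv_eq_one_div, div_le_div_iff₀ (by positivity) (by positivity)]
  have hba : (b - a) * (b + a) = 1 := by nlinarith
  nlinarith [mul_pos ha hb, mul_pos (mul_pos ha hb) hb, sq_nonneg (b - a),
    mul_le_mul_of_nonneg_left hab (mul_pos ha hb).le]

lemma tail_hasSum (N : ℕ) (hN : 1 ≤ N) :
    HasSum (fun j : ℕ => 2 / Real.sqrt ((N : ℝ) + j) - 2 / Real.sqrt ((N : ℝ) + (j + 1)))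
      (2 / Real.sqrt N) := by
  have hpos : ∀ j : ℕ, (0:ℝ) < Real.sqrt ((N : ℝ) + j) := by
    intro j
    have : (1:ℝ) ≤ (N:ℝ) := by exact_mod_cast hN
    exact Real.sqrt_pos.2 (by positivity)
  have hnn : ∀ j : ℕ, 0 ≤ 2 / Real.sqrt ((N : ℝ) + j) - 2 / Real.sqrt ((N : ℝ) + (j + 1)) := by
    intro j
    have h1 : Real.sqrt ((N : ℝ) + j) ≤ Real.sqrt ((N : ℝ) + (j + 1)) :=
      Real.sqrt_le_sqrt (by push_cast; linarith)
    have := hpos j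
    rw [sub_nonneg]
    gcongr
  rw [hasSum_iff_tendsto_nat_of_nonneg hnn]
  have hsum : ∀ n : ℕ, ∑ j ∈ Finset.range n,
      (2 / Real.sqrt ((N : ℝ) + j) - 2 / Real.sqrt ((N : ℝ) + (j + 1)))
      = 2 / Real.sqrt ((N : ℝ) + 0) - 2 / Real.sqrt ((N : ℝ) + n) := by
    intro n
    have := Finset.sum_range_sub' (fun j : ℕ => 2 / Real.sqrt ((N : ℝ) + j)) n
    simpa using this
  simp only [hsum]
  have hlim : Filter.Tendsto (fun n : ℕ => 2 / Real.sqrt ((N : ℝ) + n))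
      Filter.atTop (nhds 0) := by
    apply Filter.Tendsto.div_atTop tendsto_const_nhds
    have hr : Filter.Tendsto (fun x : ℝ => x ^ (1/2 : ℝ)) Filter.atTop Filter.atTop :=
      tendsto_rpow_atTop (by norm_num)
    have hc : Filter.Tendsto (fun n : ℕ => (N : ℝ) + n) Filter.atTop Filter.atTop :=
      Filter.tendsto_atTop_add_const_left _ _ tendsto_natCast_atTop_atTop
    refine (hr.comp hc).congr' ?_
    filter_upwards [Filter.eventually_ge_atTop 0] with n _
    rw [Function.comp_apply, ← Real.sqrt_eq_rpow]
  have : Filter.Tendsto (fun n : ℕ => 2 / Real.sqrt ((N : ℝ) + 0) - 2 / Real.sqrt ((N : ℝ) + n))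
      Filter.atTop (nhds (2 / Real.sqrt ((N : ℝ) + 0) - 0)) := tendsto_const_nhds.sub hlim
  simpa using this

lemma tail_le (N : ℕ) (hN : 1 ≤ N) :
    ∑' j : ℕ, (((j + N : ℕ) : ℝ) + 1) ^ (-(3 / 2 : ℝ)) ≤ 2 / Real.sqrt N := by
  have hHS := tail_hasSum N hN
  have hsum1 : Summable (fun j : ℕ => (((j + N : ℕ) : ℝ) + 1) ^ (-(3 / 2 : ℝ))) :=
    (summable_nat_add_iff N).2 summable_cube
  have hle : ∀ j : ℕ, (((j + N : ℕ) : ℝ) + 1) ^ (-(3 / 2 : ℝ))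
      ≤ 2 / Real.sqrt ((N : ℝ) + j) - 2 / Real.sqrt ((N : ℝ) + (j + 1)) := by
    intro j
    have h1 : (1:ℝ) ≤ (N : ℝ) + j := by
      have h : (1:ℝ) ≤ (N:ℝ) := by exact_mod_cast hN
      have hj : (0:ℝ) ≤ (j:ℝ) := j.cast_nonneg
      linarith
    have h2 := step h1
    push_cast
    have e1 : ((j:ℝ) + ↑N + 1 : ℝ) = ((N:ℝ) + ↑j) + 1 := by ring
    have e2 : ((N:ℝ) + ((j:ℝ) + 1)) = ((N:ℝ) + ↑j) + 1 := by ring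
    rw [e1, e2]
    exact h2
  calc ∑' j : ℕ, (((j + N : ℕ) : ℝ) + 1) ^ (-(3 / 2 : ℝ))
      ≤ ∑' j : ℕ, (2 / Real.sqrt ((N : ℝ) + j) - 2 / Real.sqrt ((N : ℝ) + (j + 1))) :=
        Summable.tsum_le_tsum hle hsum1 hHS.summable
    _ = 2 / Real.sqrt N := hHS.tsum_eq

end PsiHalfAux

namespace PsiHalfAux2
open PsiHalfAux

lemma harmonic_sum (N : ℕ) :
    ∑ i ∈ Finset.range N, ((i : ℝ) + 1)⁻¹ = ((harmonic N : ℚ) : ℝ) := by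
  rw [harmonic]
  push_cast
  rfl

lemma part1 : ∀ u : ℝ, 2 ≤ u → PsiHalf u ≤ 4 * (u * Real.log u + u) := by
  intro u hu
  have hu0 : (0:ℝ) < u := by linarith
  have hgs := g_summable hu0.le
  set N := ⌈u ^ 2⌉₊ with hNdef
  have hN0 : 0 < N := Nat.ceil_pos.2 (by positivity)
  have hN1 : 1 ≤ N := hN0
  have hNu : u ^ 2 ≤ (N : ℝ) := Nat.le_ceil _
  have hNle : (N : ℝ) ≤ u ^ 2 + 1 := (Nat.ceil_lt_add_one (by positivity)).le
  have hlogu : 0 ≤ Real.log u := Real.log_nonneg (by linarith)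
  have split := Summable.sum_add_tsum_nat_add N hgs
  rw [psi_eq u, ← split]
  -- head bound
  have hhead : ∑ i ∈ Finset.range N, g u i ≤ u * (1 + 3 * Real.log u) := by
    have h1 : ∑ i ∈ Finset.range N, g u i ≤ ∑ i ∈ Finset.range N, u * θ i ^ 2 :=
      Finset.sum_le_sum fun i _ => g_le_sq hu0.le i
    have h2 : ∑ i ∈ Finset.range N, u * θ i ^ 2 = u * ((harmonic N : ℚ) : ℝ) := by
      rw [← Finset.mul_sum]
      congr 1
      rw [← harmonic_sum]
      exact Finset.sum_congr rfl fun i _ => θ_sq i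
    have h3 : ((harmonic N : ℚ) : ℝ) ≤ 1 + Real.log N := harmonic_le_one_add_log N
    have h4 : Real.log N ≤ 3 * Real.log u := by
      have hle : (N : ℝ) ≤ u ^ 3 := by nlinarith
      calc Real.log N ≤ Real.log (u ^ 3) :=
            Real.log_le_log (by exact_mod_cast hN0) hle
        _ = 3 * Real.log u := by rw [Real.log_pow]; norm_num
    have h5 : u * ((harmonic N : ℚ) : ℝ) ≤ u * (1 + 3 * Real.log u) :=
      mul_le_mul_of_nonneg_left (by linarith) hu0.le
    linarith [h1, h2, h5]
  -- tail bound
  have htail : ∑' i : ℕ, g u (i + N) ≤ 2 * u := by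
    have h1 : ∑' i : ℕ, g u (i + N)
        ≤ ∑' i : ℕ, u ^ 2 * ((((i + N : ℕ) : ℝ)) + 1) ^ (-(3 / 2 : ℝ)) := by
      refine Summable.tsum_le_tsum (fun i => ?_) ((summable_nat_add_iff N).2 hgs)
        (((summable_nat_add_iff N).2 summable_cube).mul_left _)
      have := g_le_cube hu0.le (i + N)
      rwa [θ_cube] at this
    rw [tsum_mul_left] at h1
    have h2 := tail_le N hN1
    have hsq : u ≤ Real.sqrt N :=
      (Real.le_sqrt hu0.le (Nat.cast_nonneg N)).2 hNu
    have h3 : u ^ 2 * (∑' j : ℕ, (((j + N : ℕ) : ℝ) + 1) ^ (-(3 / 2 : ℝ)))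
        ≤ u ^ 2 * (2 / Real.sqrt N) := by
      refine mul_le_mul_of_nonneg_left h2 (by positivity)
    have h4 : u ^ 2 * (2 / Real.sqrt N) ≤ u ^ 2 * (2 / u) := by
      gcongr
    have h5 : u ^ 2 * (2 / u) = 2 * u := by
      field_simp
    linarith
  have hsum2 : ∑ i ∈ Finset.range N, g u i + ∑' i : ℕ, g u (i + N)
      ≤ u * (1 + 3 * Real.log u) + 2 * u := by linarith
  have hmul : 0 ≤ u * Real.log u := mul_nonneg hu0.le hlogu
  nlinarith [hsum2]

lemma psi_pos {u : ℝ} (hu : 2 ≤ u) : 0 < PsiHalf u := by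
  have hu0 : (0:ℝ) ≤ u := by linarith
  have hgs := g_summable hu0
  have h0 : g u 0 ≤ PsiHalf u := by
    rw [psi_eq]
    exact Summable.le_tsum hgs 0 fun j _ => g_nonneg j
  have hθ0 : θ 0 = 1 := by simp [θ]
  have hpos : 0 < g u 0 := by
    rw [g_eq, hθ0]
    have := Real.exp_pos (-(u * 1))
    nlinarith
  linarith

end PsiHalfAux2

namespace Part2
open PsiHalfAux PsiHalfAux2

noncomputable def φ : ℝ → ℝ := fun u => 1/4 * ((Real.log u + 1)⁻¹ * u⁻¹)

noncomputable def F : ℝ → ℝ := fun x => 1/4 * Real.log (Real.log x + 1)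

lemma logpos {u : ℝ} (hu : 2 ≤ u) : 0 < Real.log u + 1 := by
  have : 0 ≤ Real.log u := Real.log_nonneg (by linarith)
  linarith

lemma φ_nonneg {u : ℝ} (hu : 2 ≤ u) : 0 ≤ φ u := by
  have h1 := logpos hu
  have h2 : (0:ℝ) < u := by linarith
  rw [φ]
  positivity

lemma φ_le {u : ℝ} (hu : 2 ≤ u) : φ u ≤ 1 / PsiHalf u := by
  have hp := psi_pos hu
  have hb := part1 u hu
  have hu0 : u ≠ 0 := by intro h; rw [h] at hu; norm_num at hu
  have hl : Real.log u + 1 ≠ 0 := (logpos hu).ne'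
  have heq : φ u = 1 / (4 * (u * Real.log u + u)) := by
    have h4 : (4:ℝ) * (u * Real.log u + u) = 4 * u * (Real.log u + 1) := by ring
    rw [φ, h4]
    field_simp
  rw [heq]
  exact one_div_le_one_div_of_le hp hb

lemma φ_contOn : ContinuousOn φ (Set.Ici (2:ℝ)) := by
  apply ContinuousOn.mul continuousOn_const
  apply ContinuousOn.mul
  · apply ContinuousOn.inv₀
    · refine ContinuousOn.add (Real.continuousOn_log.mono ?_) continuousOn_const
      intro x hx
      simp only [Set.mem_compl_iff, Set.mem_singleton_iff]
      have : (2:ℝ) ≤ x := hx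
      intro h; rw [h] at this; norm_num at this
    · exact fun u hu => (logpos hu).ne'
  · refine continuousOn_id.inv₀ fun u hu => ?_
    have h2 : (2:ℝ) ≤ u := hu
    simp only [id_eq]
    exact ne_of_gt (by linarith)

lemma not_integrable : ¬ IntegrableOn (fun u => 1 / PsiHalf u) (Set.Ici (1 : ℝ)) := by
  intro h
  have h2 : IntegrableOn (fun u => 1 / PsiHalf u) (Set.Ici (2:ℝ)) :=
    h.mono_set (Set.Ici_subset_Ici.2 one_le_two)
  have hmeas : AEStronglyMeasurable φ (volume.restrict (Set.Ici (2:ℝ))) :=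
    φ_contOn.aestronglyMeasurable measurableSet_Ici
  have hφint : IntegrableOn φ (Set.Ici (2:ℝ)) := by
    refine Integrable.mono' h2 hmeas ?_
    refine (ae_restrict_iff' measurableSet_Ici).2 (Filter.Eventually.of_forall fun u hu => ?_)
    rw [Real.norm_eq_abs, abs_of_nonneg (φ_nonneg hu)]
    exact φ_le hu
  set I : ℝ := ∫ u in Set.Ici (2:ℝ), φ u with hI
  have key : ∀ x : ℝ, 2 ≤ x → F x - F 2 ≤ I := by
    intro x hx
    have hderiv : ∀ u ∈ Set.uIcc (2:ℝ) x, HasDerivAt F (φ u) u := by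
      intro u hu
      rw [Set.uIcc_of_le hx] at hu
      have hu2 : (2:ℝ) ≤ u := hu.1
      have hu0 : u ≠ 0 := by intro h; rw [h] at hu2; norm_num at hu2
      have hl : Real.log u + 1 ≠ 0 := (logpos hu2).ne'
      have d1 : HasDerivAt (fun y : ℝ => Real.log y + 1) u⁻¹ u :=
        (Real.hasDerivAt_log hu0).add_const 1
      have d2 : HasDerivAt (fun y : ℝ => Real.log (Real.log y + 1))
          ((Real.log u + 1)⁻¹ * u⁻¹) u := by
        have := (Real.hasDerivAt_log hl).comp u d1; exact this
      exact d2.const_mul (1/4 : ℝ)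
    have hii : IntervalIntegrable φ volume 2 x := by
      rw [intervalIntegrable_iff]
      refine hφint.mono_set ?_
      rw [Set.uIoc_of_le hx]
      exact fun y hy => hy.1.le
    have heval := intervalIntegral.integral_eq_sub_of_hasDerivAt hderiv hii
    rw [intervalIntegral.integral_of_le hx] at heval
    have hmono : ∫ u in Set.Ioc (2:ℝ) x, φ u ≤ I := by
      refine setIntegral_mono_set hφint ?_ ?_
      · exact (ae_restrict_iff' measurableSet_Ici).2
          (Filter.Eventually.of_forall fun u hu => φ_nonneg hu)
      · exact HasSubset.Subset.eventuallyLE fun y hy => hy.1.le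
    linarith [heval ▸ hmono]
  have hF : Filter.Tendsto F Filter.atTop Filter.atTop := by
    apply Filter.Tendsto.const_mul_atTop (by norm_num : (0:ℝ) < 1/4)
    exact Real.tendsto_log_atTop.comp
      (Filter.tendsto_atTop_add_const_right _ 1 Real.tendsto_log_atTop)
  obtain ⟨x, hxgt, hx2⟩ :=
    ((hF.eventually_gt_atTop (F 2 + I)).and (Filter.eventually_ge_atTop (2:ℝ))).exists
  linarith [key x hx2]

end Part2

/-- For `θ_i = i^{−1/2}`, there is a constant `C` with `Ψ_θ(u) ≤ C(u log u + u)` for `u ≥ 2`,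
and consequently `∫_1^∞ du/Ψ_θ(u) = ∞`. -/
theorem stmt5 :
    (∃ C : ℝ, 0 < C ∧ ∀ u : ℝ, 2 ≤ u → PsiHalf u ≤ C * (u * Real.log u + u)) ∧
    ¬ IntegrableOn (fun u => 1 / PsiHalf u) (Set.Ici (1 : ℝ)) :=
  ⟨⟨4, by norm_num, PsiHalfAux2.part1⟩, Part2.not_integrable⟩
end

section
/- Let (M(l))_{l≥0} be a martingale with M(0) = 0 adapted to a filtration (F_l), with increments bounded by R > 0 almost surely, and predictable quadratic variation ⟨M⟩(t) ≤ b almost surely for a fixed time t. Then for any a > 0, P(M(t) ≥ a) ≤ exp(−a²/(2(Ra + b))). -/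
open MeasureTheory Set

/-- Scalar inequality: for `|y| ≤ r < 1`, `exp y ≤ 1 + y + y² / (2(1-r))`. -/
lemma freedman_exp_aux {y r : ℝ} (hr1 : r < 1) (hy : |y| ≤ r) :
    Real.exp y ≤ 1 + y + y ^ 2 / (2 * (1 - r)) := by
  have hr0 : 0 ≤ r := (abs_nonneg y).trans hy
  have h1 : |y| ≤ 1 := hy.trans hr1.le
  have hb := Real.exp_bound h1 (n := 3) (by norm_num)
  have hsum : ∑ m ∈ Finset.range 3, y ^ m / (m.factorial : ℝ) = 1 + y + y ^ 2 / 2 := by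
    norm_num [Finset.sum_range_succ, Nat.factorial]
  rw [hsum] at hb
  have hpos : 0 < 1 - r := by linarith
  have h3 : |y| ^ 3 ≤ y ^ 2 * r := by
    have h1' : |y| ^ 3 = y ^ 2 * |y| := by rw [← sq_abs]; ring
    rw [h1']
    exact mul_le_mul_of_nonneg_left hy (sq_nonneg y)
  have habs := (abs_le.mp hb).2
  have hbnd : Real.exp y ≤ 1 + y + y ^ 2 / 2 + y ^ 2 * r * (2 / 9) := by
    norm_num [Nat.factorial] at habs
    nlinarith [pow_nonneg (abs_nonneg y) 3]
  have hfin : y ^ 2 / 2 + y ^ 2 * r * (2 / 9) ≤ y ^ 2 / (2 * (1 - r)) := by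
    rw [div_add' _ _ _ (by norm_num : (2:ℝ) ≠ 0), div_le_div_iff₀ (by norm_num) (by linarith)]
    nlinarith [sq_nonneg y, mul_nonneg (mul_nonneg (sq_nonneg y) hr0) hr0]
  linarith

/-- The key exponential supermartingale estimate for Freedman's inequality. -/
lemma freedman_key {Ω : Type*} {m0 : MeasurableSpace Ω} (μ : Measure Ω) [IsProbabilityMeasure μ]
    (F : Filtration ℕ m0) (M : ℕ → Ω → ℝ) (hM : Martingale M F μ)
    (h0 : ∀ ω, M 0 ω = 0) (R : ℝ) (hR : 0 < R)
    (hbdd : ∀ j : ℕ, ∀ᵐ ω ∂μ, |M (j + 1) ω - M j ω| ≤ R)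
    (l c : ℝ) (hl0 : 0 ≤ l) (hlR : l * R < 1) (hc : c = l ^ 2 / (2 * (1 - l * R)))
    (Q : ℕ → Ω → ℝ)
    (hQ : ∀ j, Q j = μ[fun ω' => (M (j + 1) ω' - M j ω') ^ 2 | F j]) :
    ∀ s : ℕ, Integrable (fun ω => Real.exp (l * M s ω -
        c * ∑ j ∈ Finset.range s, Q j ω)) μ ∧
      ∫ ω, Real.exp (l * M s ω - c * ∑ j ∈ Finset.range s, Q j ω) ∂μ ≤ 1 := by
  have h1lR : 0 < 1 - l * R := by linarith
  have hc0 : 0 ≤ c := hc ▸ div_nonneg (sq_nonneg _) (by linarith)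
  have hFle : ∀ j : ℕ, F j ≤ m0 := F.le
  have hDint : ∀ j : ℕ, Integrable (fun ω => M (j + 1) ω - M j ω) μ :=
    fun j => (hM.integrable _).sub (hM.integrable _)
  have hDsq_int : ∀ j : ℕ, Integrable (fun ω => (M (j + 1) ω - M j ω) ^ 2) μ := by
    intro j
    have hm : AEStronglyMeasurable (fun ω => (M (j + 1) ω - M j ω) ^ 2) μ := by
      have h := (hDint j).1
      exact h.pow 2
    refine Integrable.mono' (integrable_const (R ^ 2)) hm ?_
    filter_upwards [hbdd j] with ω hω
    rw [Real.norm_eq_abs, abs_of_nonneg (sq_nonneg _), ← sq_abs]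
    exact pow_le_pow_left₀ (abs_nonneg _) hω 2
  have hQmeas : ∀ j : ℕ, StronglyMeasurable[F j] (Q j) := fun j =>
    (hQ j) ▸ stronglyMeasurable_condExp
  have hQ0 : ∀ j : ℕ, 0 ≤ᵐ[μ] Q j := fun j =>
    (hQ j) ▸ condExp_nonneg (ae_of_all _ fun ω => sq_nonneg _)
  have hQR : ∀ j : ℕ, ∀ᵐ ω ∂μ, Q j ω ≤ R ^ 2 := by
    intro j
    have hmono : μ[fun ω => (M (j + 1) ω - M j ω) ^ 2|F j]
        ≤ᵐ[μ] μ[fun _ => R ^ 2|F j] := by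
      refine condExp_mono (hDsq_int j) (integrable_const _) ?_
      filter_upwards [hbdd j] with ω hω
      rw [← sq_abs]
      exact pow_le_pow_left₀ (abs_nonneg _) hω 2
    rw [condExp_const (hFle j)] at hmono
    filter_upwards [hmono] with ω hω
    rw [hQ j]; exact hω
  -- bound on M
  have hMb : ∀ n : ℕ, ∀ᵐ ω ∂μ, |M n ω| ≤ n * R := by
    intro n
    induction n with
    | zero => filter_upwards with ω; simp [h0 ω]
    | succ n ih =>
      filter_upwards [ih, hbdd n] with ω h1 h2
      have : M (n + 1) ω = M n ω + (M (n + 1) ω - M n ω) := by ring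
      rw [this]
      calc |M n ω + (M (n + 1) ω - M n ω)| ≤ |M n ω| + |M (n + 1) ω - M n ω| := abs_add_le _ _
        _ ≤ n * R + R := add_le_add h1 h2
        _ = (n + 1 : ℕ) * R := by push_cast; ring
  have hMmeas : ∀ n : ℕ, StronglyMeasurable (M n) := fun n =>
    (hM.stronglyMeasurable n).mono (hFle n)
  have hVmeas : ∀ n : ℕ, StronglyMeasurable (fun ω => ∑ j ∈ Finset.range n, Q j ω) := by
    intro n
    have h := Finset.stronglyMeasurable_sum (Finset.range n) fun j _ => (hQmeas j).mono (hFle j)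
    have he : (∑ j ∈ Finset.range n, Q j) = fun ω => ∑ j ∈ Finset.range n, Q j ω := by
      funext ω; simp
    rwa [he] at h
  have hXmeas : ∀ n : ℕ, StronglyMeasurable
      (fun ω => Real.exp (l * M n ω - c * ∑ j ∈ Finset.range n, Q j ω)) := fun n =>
    Real.continuous_exp.comp_stronglyMeasurable
      ((stronglyMeasurable_const.mul (hMmeas n)).sub
        (stronglyMeasurable_const.mul (hVmeas n)))
  have hV0le : ∀ n : ℕ, ∀ᵐ ω ∂μ, 0 ≤ ∑ j ∈ Finset.range n, Q j ω := by
    intro n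
    have h := (ae_ball_iff (Finset.range n : Finset ℕ).countable_toSet).2
      fun j (_ : j ∈ (Finset.range n : Finset ℕ)) => hQ0 j
    filter_upwards [h] with ω hω
    exact Finset.sum_nonneg fun j hj => hω j hj
  have hXint : ∀ n : ℕ, Integrable
      (fun ω => Real.exp (l * M n ω - c * ∑ j ∈ Finset.range n, Q j ω)) μ := by
    intro n
    refine Integrable.mono' (integrable_const (Real.exp (l * (n * R)))) (hXmeas n).aestronglyMeasurable ?_
    filter_upwards [hMb n, hV0le n] with ω h1 h2
    rw [Real.norm_eq_abs, abs_of_nonneg (Real.exp_pos _).le, Real.exp_le_exp]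
    have : l * M n ω ≤ l * (n * R) := by
      refine mul_le_mul_of_nonneg_left ?_ hl0
      exact (le_abs_self _).trans h1
    nlinarith [mul_nonneg hc0 h2]
  intro s
  refine ⟨hXint s, ?_⟩
  induction s with
  | zero =>
    have hX0 : (fun ω => Real.exp (l * M 0 ω - c * ∑ j ∈ Finset.range 0, Q j ω))
        = fun _ => (1 : ℝ) := by
      funext ω; simp [h0 ω]
    rw [hX0]
    simp
  | succ n ih =>
    set A : Ω → ℝ := fun ω => Real.exp (l * M n ω - c * ∑ j ∈ Finset.range (n + 1), Q j ω)
      with hA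
    set G : Ω → ℝ := fun ω => Real.exp (l * (M (n + 1) ω - M n ω)) with hG
    have hXAG : (fun ω => Real.exp (l * M (n + 1) ω - c * ∑ j ∈ Finset.range (n + 1), Q j ω))
        = fun ω => A ω * G ω := by
      funext ω
      rw [hA, hG, ← Real.exp_add]
      congr 1
      ring
    have hAmeas : StronglyMeasurable[F n] A := by
      refine Real.continuous_exp.comp_stronglyMeasurable ?_
      refine StronglyMeasurable.sub (stronglyMeasurable_const.mul (hM.stronglyMeasurable n))
        (stronglyMeasurable_const.mul ?_)
      have h := Finset.stronglyMeasurable_sum (m := F n) (Finset.range (n + 1))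
        fun j hj => (hQmeas j).mono (F.mono (Nat.lt_succ_iff.mp (Finset.mem_range.mp hj)))
      have he : (∑ j ∈ Finset.range (n + 1), Q j) = fun ω => ∑ j ∈ Finset.range (n + 1), Q j ω := by
        funext ω; simp
      rwa [he] at h
    have hGmeas : AEStronglyMeasurable G μ :=
      (Real.continuous_exp.comp_stronglyMeasurable
        (stronglyMeasurable_const.mul ((hMmeas (n + 1)).sub (hMmeas n)))).aestronglyMeasurable
    have hGint : Integrable G μ := by
      refine Integrable.mono' (integrable_const (Real.exp (l * R))) hGmeas ?_
      filter_upwards [hbdd n] with ω hω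
      rw [Real.norm_eq_abs, abs_of_nonneg (Real.exp_pos _).le, Real.exp_le_exp]
      exact mul_le_mul_of_nonneg_left ((le_abs_self _).trans hω) hl0
    have hAGint : Integrable (fun ω => A ω * G ω) μ := hXAG ▸ hXint (n + 1)
    have hpull : μ[A * G|F n] =ᵐ[μ] A * μ[G|F n] :=
      condExp_mul_of_stronglyMeasurable_left hAmeas hAGint hGint
    have hstep1 : ∫ ω, A ω * G ω ∂μ = ∫ ω, A ω * (μ[G|F n]) ω ∂μ := by
      have e1 := integral_condExp (μ := μ) (f := A * G) (hFle n)
      have e2 := integral_congr_ae hpull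
      simp only [Pi.mul_apply] at e1 e2
      exact e1.symm.trans e2
    -- bound the conditional expectation of G
    have hcondD : μ[fun ω => M (n + 1) ω - M n ω|F n] =ᵐ[μ] fun _ => (0 : ℝ) := by
      have h1 : μ[fun ω => M (n + 1) ω - M n ω|F n]
          =ᵐ[μ] μ[M (n + 1)|F n] - μ[M n|F n] :=
        condExp_sub (μ := μ) (m := F n) (hM.integrable (n + 1)) (hM.integrable n)
      have h2 := hM.condExp_ae_eq (Nat.le_succ n)
      have h3 : μ[M n|F n] = M n :=
        condExp_of_stronglyMeasurable (hFle n) (hM.stronglyMeasurable n) (hM.integrable n)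
      filter_upwards [h1, h2] with ω hω1 hω2
      simp only [Pi.sub_apply] at hω1
      rw [hω1, hω2, h3]
      simp
    have hGle : μ[G|F n] ≤ᵐ[μ] fun ω => Real.exp (c * Q n ω) := by
      have hH : G ≤ᵐ[μ] (fun ω => 1 + l * (M (n + 1) ω - M n ω))
          + fun ω => c * (M (n + 1) ω - M n ω) ^ 2 := by
        filter_upwards [hbdd n] with ω hω
        have hyr : |l * (M (n + 1) ω - M n ω)| ≤ l * R := by
          rw [abs_mul, abs_of_nonneg hl0]
          exact mul_le_mul_of_nonneg_left hω hl0
        have := freedman_exp_aux hlR hyr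
        have hrw : (l * (M (n + 1) ω - M n ω)) ^ 2 / (2 * (1 - l * R))
            = c * (M (n + 1) ω - M n ω) ^ 2 := by
          rw [hc]; ring
        rw [hrw] at this
        simpa [hG, Pi.add_apply] using this
      have hint1 : Integrable (fun ω => 1 + l * (M (n + 1) ω - M n ω)) μ :=
        (integrable_const (1 : ℝ)).add ((hDint n).const_mul l)
      have hint2 : Integrable (fun ω => c * (M (n + 1) ω - M n ω) ^ 2) μ :=
        (hDsq_int n).const_mul c
      have hcmono : μ[G|F n] ≤ᵐ[μ] μ[(fun ω => 1 + l * (M (n + 1) ω - M n ω))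
          + fun ω => c * (M (n + 1) ω - M n ω) ^ 2|F n] :=
        condExp_mono hGint (hint1.add hint2) hH
      have hsplit : μ[(fun ω => 1 + l * (M (n + 1) ω - M n ω))
          + fun ω => c * (M (n + 1) ω - M n ω) ^ 2|F n]
          =ᵐ[μ] μ[fun ω => 1 + l * (M (n + 1) ω - M n ω)|F n]
            + μ[fun ω => c * (M (n + 1) ω - M n ω) ^ 2|F n] :=
        condExp_add hint1 hint2 _
      have hsplit1 : μ[fun ω => 1 + l * (M (n + 1) ω - M n ω)|F n]
          =ᵐ[μ] (fun _ => (1 : ℝ)) + μ[fun ω => l * (M (n + 1) ω - M n ω)|F n] := by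
        have h := condExp_add (μ := μ) (m := F n) (f := fun _ => (1 : ℝ))
          (g := fun ω => l * (M (n + 1) ω - M n ω)) (integrable_const 1)
          ((hDint n).const_mul l)
        rw [condExp_const (hFle n)] at h
        exact h
      have hsmul1 : μ[fun ω => l * (M (n + 1) ω - M n ω)|F n]
          =ᵐ[μ] fun ω => l * (μ[fun ω' => M (n + 1) ω' - M n ω'|F n]) ω := by
        have := condExp_smul (μ := μ) (m := F n) l (fun ω => M (n + 1) ω - M n ω)
        exact this
      have hsmul2 : μ[fun ω => c * (M (n + 1) ω - M n ω) ^ 2|F n]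
          =ᵐ[μ] fun ω => c * Q n ω := by
        have := condExp_smul (μ := μ) (m := F n) c (fun ω => (M (n + 1) ω - M n ω) ^ 2)
        rw [hQ n]
        exact this
      filter_upwards [hcmono, hsplit, hsplit1, hsmul1, hsmul2, hcondD, hQ0 n] with ω
        w1 w2 w3 w4 w5 w6 w7
      have hle : (μ[G|F n]) ω ≤ 1 + c * Q n ω := by
        rw [w2, Pi.add_apply, w5] at w1
        rw [w3, Pi.add_apply, w4, w6] at w1
        simpa using w1
      refine hle.trans ?_
      have := Real.add_one_le_exp (c * Q n ω)
      linarith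
    have hcondint : Integrable (fun ω => A ω * (μ[G|F n]) ω) μ :=
      integrable_condExp.congr hpull
    have hAexpQ : (fun ω => A ω * Real.exp (c * Q n ω))
        = fun ω => Real.exp (l * M n ω - c * ∑ j ∈ Finset.range n, Q j ω) := by
      funext ω
      rw [hA, ← Real.exp_add]
      congr 1
      rw [Finset.sum_range_succ]
      ring
    have hstep2 : ∫ ω, A ω * (μ[G|F n]) ω ∂μ
        ≤ ∫ ω, Real.exp (l * M n ω - c * ∑ j ∈ Finset.range n, Q j ω) ∂μ := by
      rw [← hAexpQ]
      refine integral_mono_ae hcondint (hAexpQ ▸ hXint n) ?_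
      filter_upwards [hGle] with ω hω
      exact mul_le_mul_of_nonneg_left hω (Real.exp_pos _).le
    calc ∫ ω, Real.exp (l * M (n + 1) ω - c * ∑ j ∈ Finset.range (n + 1), Q j ω) ∂μ
        = ∫ ω, A ω * G ω ∂μ := by rw [hXAG]
      _ = ∫ ω, A ω * (μ[G|F n]) ω ∂μ := hstep1
      _ ≤ ∫ ω, Real.exp (l * M n ω - c * ∑ j ∈ Finset.range n, Q j ω) ∂μ := hstep2
      _ ≤ 1 := ih

/-- Freedman's inequality: if `M` is a martingale with `M 0 = 0`, increments bounded by `R`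
a.s., and predictable quadratic variation `⟨M⟩(t) ≤ b` a.s., then for any `a > 0`,
`P(M(t) ≥ a) ≤ exp(−a²/(2(Ra + b)))`. -/
theorem stmt10 {Ω : Type*} {m0 : MeasurableSpace Ω} (μ : Measure Ω) [IsProbabilityMeasure μ]
    (F : Filtration ℕ m0) (M : ℕ → Ω → ℝ) (hM : Martingale M F μ)
    (h0 : ∀ ω, M 0 ω = 0) (R : ℝ) (hR : 0 < R)
    (hbdd : ∀ j : ℕ, ∀ᵐ ω ∂μ, |M (j + 1) ω - M j ω| ≤ R)
    (t : ℕ) (b : ℝ) (hb : 0 < b)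
    (hqv : ∀ᵐ ω ∂μ, ∑ j ∈ Finset.range t,
        (μ[fun ω' => (M (j + 1) ω' - M j ω') ^ 2 | F j]) ω ≤ b)
    (a : ℝ) (ha : 0 < a) :
    (μ {ω | a ≤ M t ω}).toReal ≤ Real.exp (-a ^ 2 / (2 * (R * a + b))) := by
  have hKpos : 0 < R * a + b := by positivity
  set l : ℝ := a / (R * a + b) with hl
  have hl0 : 0 < l := div_pos ha hKpos
  have hlR : l * R < 1 := by
    rw [hl, div_mul_eq_mul_div, div_lt_one hKpos]
    nlinarith
  have h1lR : 0 < 1 - l * R := by linarith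
  set c : ℝ := l ^ 2 / (2 * (1 - l * R)) with hc
  have hc0 : 0 ≤ c := div_nonneg (sq_nonneg _) (by linarith)
  set Q : ℕ → Ω → ℝ := fun j => μ[fun ω' => (M (j + 1) ω' - M j ω') ^ 2|F j] with hQdef
  obtain ⟨hXint, hXle⟩ := freedman_key μ F M hM h0 R hR hbdd l c hl0.le hlR hc Q (fun j => rfl) t
  set X : Ω → ℝ := fun ω => Real.exp (l * M t ω - c * ∑ j ∈ Finset.range t, Q j ω) with hXdef
  set ε : ℝ := Real.exp (l * a - c * b) with hε
  have hεpos : 0 < ε := Real.exp_pos _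
  have hmono : μ {ω | a ≤ M t ω} ≤ μ {ω | ε ≤ X ω} := by
    refine measure_mono_ae ?_
    filter_upwards [hqv] with ω hω hmem
    have hsum : ∑ j ∈ Finset.range t, Q j ω ≤ b := hω
    have hmem' : a ≤ M t ω := hmem
    show ε ≤ X ω
    rw [hε, hXdef, Real.exp_le_exp]
    have h1 : l * a ≤ l * M t ω := mul_le_mul_of_nonneg_left hmem' hl0.le
    have h2 : c * ∑ j ∈ Finset.range t, Q j ω ≤ c * b := mul_le_mul_of_nonneg_left hsum hc0
    linarith
  have hmarkov := mul_meas_ge_le_integral_of_nonneg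
    (ae_of_all μ fun ω => (Real.exp_pos _).le) hXint ε
  have htoReal : (μ {ω | a ≤ M t ω}).toReal ≤ (μ {ω | ε ≤ X ω}).toReal :=
    ENNReal.toReal_mono (measure_ne_top μ _) hmono
  have hbound : (μ {ω | ε ≤ X ω}).toReal ≤ 1 / ε := by
    rw [le_div_iff₀ hεpos, mul_comm]
    exact hmarkov.trans hXle
  have hfinal : 1 / ε = Real.exp (-a ^ 2 / (2 * (R * a + b))) := by
    rw [hε, one_div, ← Real.exp_neg]
    congr 1
    have hbK : 1 - l * R = b / (R * a + b) := by
      rw [hl]; field_simp; ring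
    rw [hc, hl, hbK]
    field_simp
    ring
  calc (μ {ω | a ≤ M t ω}).toReal ≤ (μ {ω | ε ≤ X ω}).toReal := htoReal
    _ ≤ 1 / ε := hbound
    _ = Real.exp (-a ^ 2 / (2 * (R * a + b))) := hfinal
end
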